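/- Let n ≥ 2 and let k, i, j satisfy 1 ≤ k < i < j ≤ n. Then τ^{n,k}_{i,j} = s_{k+1} s_{k+2} ⋯ s_{j−1} ∘ s_k ∘ s_{k+1} s_{k+2} ⋯ s_{i−1} (the trailing product s_{k+1}⋯s_{i−1} being empty when i = k+1), where all products are composed right to left. -/

import Mathlib

/-- `IsTau k hk i j w`: defining property of `τ^{n,k}_{i,j}` (0-indexed form). -/
def IsTau {n : ℕ} (k : ℕ) (hk : k + 1 < n) (i j : Fin n) (w : Equiv.Perm (Fin n)) : Prop :=
  w i = ⟨k, Nat.lt_of_succ_lt hk⟩ ∧ w j = ⟨k + 1, hk⟩ ∧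
    ∀ s t : Fin n, s < t → s ≠ i → s ≠ j → t ≠ i → t ≠ j → w s < w t

/-- The adjacent transposition `s_l = (l, l+1)` (0-indexed), interpreted as the
identity out of range. -/
def sT (n l : ℕ) : Equiv.Perm (Fin n) :=
  if h : l + 1 < n then Equiv.swap ⟨l, Nat.lt_of_succ_lt h⟩ ⟨l + 1, h⟩ else 1

/-- The product `s_a s_{a+1} ⋯ s_b`, composed right to left (identity if `b < a`). -/
def ascProd (n a b : ℕ) : Equiv.Perm (Fin n) :=
  ((List.range' a (b + 1 - a)).map (sT n)).prod

lemma sT_apply (n l : ℕ) (hl : l + 1 < n) (w : Fin n) :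
    ((sT n l) w).val = if w.val = l then l + 1 else if w.val = l + 1 then l else w.val := by
  unfold sT
  rw [dif_pos hl, Equiv.swap_apply_def]
  split_ifs <;> simp_all [Fin.ext_iff]

lemma ascProd_nil (n a b : ℕ) (h : b + 1 ≤ a) : ascProd n a b = 1 := by
  unfold ascProd
  have h0 : b + 1 - a = 0 := by omega
  simp [h0]

lemma ascProd_cons (n a b : ℕ) (h : a ≤ b) : ascProd n a b = sT n a * ascProd n (a + 1) b := by
  unfold ascProd
  have h1 : b + 1 - a = (b + 1 - (a + 1)) + 1 := by omega
  rw [h1, List.range'_succ]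
  simp

lemma ascProd_apply (n b : ℕ) (hb : b + 1 < n) :
    ∀ m a, b + 1 - a = m → ∀ x : Fin n,
      ((ascProd n a b) x).val =
        if a ≤ x.val ∧ x.val ≤ b then x.val + 1
        else if x.val = b + 1 then min a x.val else x.val := by
  intro m
  induction m with
  | zero =>
      intro a ha x
      rw [ascProd_nil n a b (by omega)]
      have := x.isLt
      simp only [Equiv.Perm.one_apply]
      split_ifs <;> omega
  | succ m ih =>
      intro a ha x
      have hab : a ≤ b := by omega
      rw [ascProd_cons n a b hab]
      simp only [Equiv.Perm.mul_apply]
      have hyv := ih (a + 1) (by omega) x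
      rw [sT_apply n a (by omega)]
      have := x.isLt
      split_ifs at hyv ⊢ <;> omega

lemma g_apply (n k i j : ℕ) (hki : k < i) (hij : i < j) (hj : j < n) (x : Fin n) :
    ((ascProd n (k + 1) (j - 1) * sT n k * ascProd n (k + 1) (i - 1)) x).val =
      if x.val = i then k
      else if x.val = j then k + 1
      else if x.val < k then x.val
      else if x.val < i then x.val + 2
      else if x.val < j then x.val + 1
      else x.val := by
  simp only [Equiv.Perm.mul_apply]
  have hB := ascProd_apply n (i - 1) (by omega) (i - 1 + 1 - (k + 1)) (k + 1) rfl x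
  have hi1 : i - 1 + 1 = i := by omega
  rw [hi1] at hB
  have hz := sT_apply n k (by omega) ((ascProd n (k + 1) (i - 1)) x)
  have hA := ascProd_apply n (j - 1) (by omega) (j - 1 + 1 - (k + 1)) (k + 1) rfl
      ((sT n k) ((ascProd n (k + 1) (i - 1)) x))
  have hj1 : j - 1 + 1 = j := by omega
  rw [hj1] at hA
  rw [hA]
  have := x.isLt
  split_ifs at hB hz ⊢ <;> omega

lemma isTau_g (n k i j : ℕ) (hki : k < i) (hij : i < j) (hj : j < n) :
    IsTau k (Nat.lt_of_le_of_lt (Nat.succ_le_of_lt hki) (Nat.lt_trans hij hj))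
      (⟨i, Nat.lt_trans hij hj⟩ : Fin n) ⟨j, hj⟩
      (ascProd n (k + 1) (j - 1) * sT n k * ascProd n (k + 1) (i - 1)) := by
  refine ⟨?_, ?_, ?_⟩
  · apply Fin.ext
    rw [g_apply n k i j hki hij hj]
    simp
  · apply Fin.ext
    rw [g_apply n k i j hki hij hj]
    have : j ≠ i := by omega
    simp [this]
  · intro s t hst hsi hsj hti htj
    have hs := g_apply n k i j hki hij hj s
    have ht := g_apply n k i j hki hij hj t
    rw [Fin.lt_def] at hst ⊢
    have hsi' : s.val ≠ i := fun h => hsi (Fin.ext h)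
    have hsj' : s.val ≠ j := fun h => hsj (Fin.ext h)
    have hti' : t.val ≠ i := fun h => hti (Fin.ext h)
    have htj' : t.val ≠ j := fun h => htj (Fin.ext h)
    split_ifs at hs ht <;> omega

theorem Equiv.Perm.apply_inv_self {α : Type*} (f : Equiv.Perm α) (x : α) : f (f⁻¹ x) = x :=
  f.apply_symm_apply x

theorem Equiv.Perm.inv_apply_self {α : Type*} (f : Equiv.Perm α) (x : α) : f⁻¹ (f x) = x :=
  f.symm_apply_apply x

lemma fix_mono_eq_one {n : ℕ} (u : Equiv.Perm (Fin n)) (a b : Fin n)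
    (ha : u a = a) (hb : u b = b)
    (hm : ∀ s t : Fin n, s < t → s ≠ a → s ≠ b → t ≠ a → t ≠ b → u s < u t) : u = 1 := by
  have key : ∀ m : ℕ, ∀ x : Fin n, x.val = m → u x = x := by
    intro m
    induction m using Nat.strong_induction_on with
    | _ m ih =>
      intro x hxm
      by_cases hxa : x = a
      · rw [hxa]; exact ha
      by_cases hxb : x = b
      · rw [hxb]; exact hb
      have hge : x ≤ u x := by
        by_contra hcon
        push_neg at hcon
        have hcv : (u x).val < m := by rw [Fin.lt_def] at hcon; omega
        have h1 : u (u x) = u x := ih (u x).val hcv (u x) rfl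
        have h2 : u x = x := u.injective h1
        rw [h2] at hcon
        exact lt_irrefl _ hcon
      rcases eq_or_lt_of_le hge with heq | hlt
      · exact heq.symm
      · exfalso
        have hz : u (u⁻¹ x) = x := Equiv.Perm.apply_inv_self u x
        have hzx : x < u⁻¹ x := by
          rcases lt_trichotomy (u⁻¹ x) x with h | h | h
          · have hcv : (u⁻¹ x).val < m := by rw [Fin.lt_def] at h; omega
            have h1 : u (u⁻¹ x) = u⁻¹ x := ih (u⁻¹ x).val hcv (u⁻¹ x) rfl
            rw [hz] at h1
            exfalso
            rw [← h1] at h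
            exact lt_irrefl _ h
          · exfalso
            rw [h] at hz
            rw [hz] at hlt
            exact lt_irrefl _ hlt
          · exact h
        have hza : u⁻¹ x ≠ a := by
          intro h; rw [h, ha] at hz; exact hxa hz.symm
        have hzb : u⁻¹ x ≠ b := by
          intro h; rw [h, hb] at hz; exact hxb hz.symm
        have := hm x (u⁻¹ x) hzx hxa hxb hza hzb
        rw [hz] at this
        exact absurd this (not_lt.2 (le_of_lt hlt))
  ext x
  rw [Equiv.Perm.one_apply]
  exact congrArg Fin.val (key x.val x rfl)

lemma isTau_unique {n k : ℕ} {hk : k + 1 < n} {i j : Fin n} {w w' : Equiv.Perm (Fin n)}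
    (hw : IsTau k hk i j w) (hw' : IsTau k hk i j w') : w' = w := by
  obtain ⟨hwi, hwj, hwm⟩ := hw
  obtain ⟨h'i, h'j, h'm⟩ := hw'
  have hinvk : w⁻¹ ⟨k, Nat.lt_of_succ_lt hk⟩ = i := by
    rw [← hwi]; exact Equiv.Perm.inv_apply_self w i
  have hinvk1 : w⁻¹ ⟨k + 1, hk⟩ = j := by
    rw [← hwj]; exact Equiv.Perm.inv_apply_self w j
  have key : w' * w⁻¹ = 1 := by
    apply fix_mono_eq_one (w' * w⁻¹) ⟨k, Nat.lt_of_succ_lt hk⟩ ⟨k + 1, hk⟩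
    · simp only [Equiv.Perm.mul_apply, hinvk]; exact h'i
    · simp only [Equiv.Perm.mul_apply, hinvk1]; exact h'j
    · intro s t hst hsa hsb hta htb
      simp only [Equiv.Perm.mul_apply]
      have hsi : w⁻¹ s ≠ i := by
        intro h
        apply hsa
        rw [← hwi, ← h, Equiv.Perm.apply_inv_self]
      have hsj : w⁻¹ s ≠ j := by
        intro h
        apply hsb
        rw [← hwj, ← h, Equiv.Perm.apply_inv_self]
      have hti : w⁻¹ t ≠ i := by
        intro h
        apply hta
        rw [← hwi, ← h, Equiv.Perm.apply_inv_self]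
      have htj : w⁻¹ t ≠ j := by
        intro h
        apply htb
        rw [← hwj, ← h, Equiv.Perm.apply_inv_self]
      have hst' : w⁻¹ s < w⁻¹ t := by
        rcases lt_trichotomy (w⁻¹ s) (w⁻¹ t) with h | h | h
        · exact h
        · exfalso; apply ne_of_lt hst; rw [← Equiv.Perm.apply_inv_self w s, h,
            Equiv.Perm.apply_inv_self]
        · exfalso
          have := hwm (w⁻¹ t) (w⁻¹ s) h hti htj hsi hsj
          rw [Equiv.Perm.apply_inv_self, Equiv.Perm.apply_inv_self] at this
          exact absurd hst (not_lt.2 (le_of_lt this))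
      exact h'm (w⁻¹ s) (w⁻¹ t) hst' hsi hsj hti htj
  calc w' = w' * w⁻¹ * w := by group
    _ = w := by rw [key, one_mul]

/-- For `k < i < j ≤ n-1`:
`τ^{n,k}_{i,j} = (s_{k+1} ⋯ s_{j-1}) ∘ s_k ∘ (s_{k+1} ⋯ s_{i-1})`
(the trailing product being empty if `i = k+1`). -/
theorem stmt6 (n k i j : ℕ) (hn : 2 ≤ n) (hki : k < i) (hij : i < j) (hj : j < n) :
    ∀ w : Equiv.Perm (Fin n),
      IsTau k (by omega) ⟨i, by omega⟩ ⟨j, hj⟩ w ↔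
        w = ascProd n (k + 1) (j - 1) * sT n k * ascProd n (k + 1) (i - 1) := by
  intro w
  constructor
  · intro hw
    exact isTau_unique (isTau_g n k i j hki hij hj) hw
  · rintro rfl
    exact isTau_g n k i j hki hij hj
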